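/- For d ≥ 3 and a ≥ 2, the polynomial map f_{d,a}: ℂ² → ℂ² given by f_{d,a}(x,y) = (x, y^d − d x^a y) is proper of topological degree d. -/

import Mathlib

/-- A map `f : ℂ² → ℂ²` has topological degree `d` if, away from an algebraic
curve, every fiber has exactly `d` points. -/
def HasTopDegree (f : ℂ × ℂ → ℂ × ℂ) (d : ℕ) : Prop :=
  ∃ P : MvPolynomial (Fin 2) ℂ, P ≠ 0 ∧
    ∀ p : ℂ × ℂ, MvPolynomial.eval ![p.1, p.2] P ≠ 0 → (f ⁻¹' {p}).ncard = d

/-- For `d ≥ 3` and `a ≥ 2`, the polynomial map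
`f_{d,a}(x,y) = (x, y^d − d x^a y)` is proper of topological degree `d`. -/
theorem stmt_3 (d a : ℕ) (hd : 3 ≤ d) (ha : 2 ≤ a) :
    (∀ K : Set (ℂ × ℂ), IsCompact K →
      IsCompact ((fun p : ℂ × ℂ => (p.1, p.2 ^ d - (d : ℂ) * p.1 ^ a * p.2)) ⁻¹' K)) ∧
    HasTopDegree (fun p : ℂ × ℂ => (p.1, p.2 ^ d - (d : ℂ) * p.1 ^ a * p.2)) d := by
  have hdC : (d : ℂ) ≠ 0 := Nat.cast_ne_zero.mpr (by omega)
  constructor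
  · -- properness
    intro K hK
    have hcont : Continuous (fun p : ℂ × ℂ => (p.1, p.2 ^ d - (d : ℂ) * p.1 ^ a * p.2)) := by
      fun_prop
    apply Metric.isCompact_of_isClosed_isBounded (hK.isClosed.preimage hcont)
    obtain ⟨M0, hM0⟩ := hK.isBounded.exists_norm_le
    set M : ℝ := max M0 1 with hM
    have hM1 : (1:ℝ) ≤ M := le_max_right _ _
    have hMle : ∀ p ∈ K, ‖p‖ ≤ M := fun p hp => (hM0 p hp).trans (le_max_left _ _)
    rw [isBounded_iff_forall_norm_le]
    refine ⟨max M (1 + M + d * M ^ a), fun p hp => ?_⟩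
    obtain ⟨x, y⟩ := p
    have hmem := hMle _ hp
    rw [Prod.norm_def] at hmem ⊢
    simp only [sup_le_iff] at hmem ⊢
    obtain ⟨hx, hy⟩ := hmem
    refine ⟨le_trans hx (le_max_left _ _), le_trans ?_ (le_max_right _ _)⟩
    -- ‖y‖ ≤ 1 + M + d * M ^ a
    by_contra hyc
    push_neg at hyc
    have hxa : ‖(d:ℂ) * x ^ a * y‖ ≤ d * M ^ a * ‖y‖ := by
      rw [norm_mul, norm_mul, norm_pow, Complex.norm_natCast]
      gcongr
    have hkey : ‖y‖ ^ d ≤ M + d * M ^ a * ‖y‖ := by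
      calc ‖y‖ ^ d = ‖y ^ d‖ := (norm_pow y d).symm
        _ = ‖(y ^ d - (d:ℂ) * x ^ a * y) + (d:ℂ) * x ^ a * y‖ := by ring_nf
        _ ≤ ‖y ^ d - (d:ℂ) * x ^ a * y‖ + ‖(d:ℂ) * x ^ a * y‖ := norm_add_le _ _
        _ ≤ M + d * M ^ a * ‖y‖ := add_le_add hy hxa
    have hy1 : (1:ℝ) ≤ ‖y‖ := by
      have : (0:ℝ) ≤ d * M ^ a := by positivity
      nlinarith
    have hpow : ‖y‖ ^ 2 ≤ ‖y‖ ^ d := pow_le_pow_right₀ hy1 (by omega)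
    have hMa : (0:ℝ) ≤ d * M ^ a := by positivity
    nlinarith [sq_nonneg (‖y‖ - 1), mul_le_mul_of_nonneg_left hyc.le hMa]
  · -- topological degree
    classical
    refine ⟨MvPolynomial.X 1 ^ (d-1)
        - MvPolynomial.C ((1 - (d:ℂ))^(d-1)) * MvPolynomial.X 0 ^ (a*d), ?_, ?_⟩
    · intro h
      have := congrArg (MvPolynomial.eval ![(0:ℂ), 1]) h
      simp [Matrix.cons_val_one, Matrix.head_cons,
        zero_pow (Nat.mul_ne_zero (by omega) (by omega) : a*d ≠ 0)] at this
    · rintro ⟨x, w⟩ hP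
      simp only [MvPolynomial.eval_sub, MvPolynomial.eval_mul, MvPolynomial.eval_pow,
        MvPolynomial.eval_X, MvPolynomial.eval_C, Matrix.cons_val_one, Matrix.head_cons,
        Matrix.cons_val_zero] at hP
      set c : ℂ := (d:ℂ) * x ^ a with hc
      set q : Polynomial ℂ := Polynomial.X ^ d - Polynomial.C c * Polynomial.X
          - Polynomial.C w with hq
      have hcx : (Polynomial.C c * Polynomial.X : Polynomial ℂ).natDegree < d :=
        lt_of_le_of_lt (Polynomial.natDegree_C_mul_le _ _) (by simp; omega)
      have h1 : (Polynomial.X ^ d - Polynomial.C c * Polynomial.X : Polynomial ℂ).natDegree = d := by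
        rw [Polynomial.natDegree_sub_eq_left_of_natDegree_lt
          (by rw [Polynomial.natDegree_X_pow]; exact hcx), Polynomial.natDegree_X_pow]
      have hdeg : q.natDegree = d := by
        rw [hq, Polynomial.natDegree_sub_eq_left_of_natDegree_lt
          (by rw [h1, Polynomial.natDegree_C]; omega), h1]
      have hq0 : q ≠ 0 := fun h => by simp [h] at hdeg; omega
      have hqe : ∀ y : ℂ, q.eval y = y ^ d - c * y - w := by intro y; simp [hq]
      have hder : q.derivative = Polynomial.C ((d:ℂ)) * Polynomial.X ^ (d-1) - Polynomial.C c := by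
        simp [hq, Polynomial.derivative_X_pow]
      -- no double roots
      have hnodup : q.roots.Nodup := by
        rw [Multiset.nodup_iff_count_le_one]
        intro z
        rw [Polynomial.count_roots]
        by_contra hcount
        push_neg at hcount
        have h2 : 2 ≤ Polynomial.rootMultiplicity z q := hcount
        have hroot : q.IsRoot z := by
          rw [← Polynomial.rootMultiplicity_pos hq0]; omega
        have hder1 : 0 < Polynomial.rootMultiplicity z q.derivative := by
          rw [Polynomial.derivative_rootMultiplicity_of_root hroot]; omega
        have hder0 : q.derivative ≠ 0 := by
          intro h
          rw [h, Polynomial.rootMultiplicity_zero] at hder1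
          simp at hder1
        have hdroot : q.derivative.IsRoot z :=
          (Polynomial.rootMultiplicity_pos hder0).mp hder1
        rw [hder] at hdroot
        have hz1 : (d:ℂ) * z ^ (d-1) = c := by
          have := hdroot
          simp [Polynomial.IsRoot] at this
          linear_combination this
        have hz0 : z ^ d - c * z - w = 0 := by rw [← hqe]; exact hroot
        -- derive w = (1-d) z^d and z^(d-1) = x^a
        have hzx : z ^ (d-1) = x ^ a := mul_left_cancel₀ hdC (hz1.trans hc)
        have hw : w = (1 - (d:ℂ)) * z ^ d := by
          have hzd : z ^ d = z ^ (d-1) * z := by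
            rw [← pow_succ]; congr 1; omega
          rw [← hz1] at hz0
          linear_combination -hz0 + (d:ℂ)*hzd
        apply hP
        have : w ^ (d-1) = (1 - (d:ℂ))^(d-1) * x ^ (a*d) := by
          rw [hw, mul_pow, ← pow_mul, mul_comm d (d-1), pow_mul, hzx, ← pow_mul, mul_comm a d, mul_comm d a]
        rw [this]; ring
      -- count roots
      have hsplits : q.Splits := IsAlgClosed.splits q
      have hcard : q.roots.card = d := by
        rw [Polynomial.splits_iff_card_roots.mp hsplits, hdeg]
      have hfiber : (fun p : ℂ × ℂ => (p.1, p.2 ^ d - (d : ℂ) * p.1 ^ a * p.2)) ⁻¹' {(x, w)}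
          = Prod.mk x '' {y : ℂ | q.eval y = 0} := by
        ext ⟨u, v⟩
        simp only [Set.mem_preimage, Set.mem_singleton_iff, Prod.mk.injEq, Set.mem_image,
          Set.mem_setOf_eq, hqe]
        constructor
        · rintro ⟨rfl, h2⟩
          exact ⟨v, by rw [hc]; linear_combination h2, rfl, rfl⟩
        · rintro ⟨y, hy, rfl, rfl⟩
          exact ⟨rfl, by rw [hc] at hy; linear_combination hy⟩
      rw [hfiber, Set.ncard_image_of_injective _ (fun a b h => congrArg Prod.snd h)]
      have hset : {y : ℂ | q.eval y = 0} = ↑q.roots.toFinset := by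
        ext y
        simp [Polynomial.mem_roots, hq0, Polynomial.IsRoot]
      rw [hset, Set.ncard_coe_finset, Multiset.toFinset_card_of_nodup hnodup, hcard]
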